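/- Let c, f : ℝ → ℂ be continuous 2π-periodic functions, let λ ∈ ℝ, and set c₀ = (2π)⁻¹ ∫₀^{2π} c(t) dt. Assume λ c₀ ∈ ℤ and ∫₀^{2π} exp(i λ ∫₀ᵗ c(s) ds) f(t) dt = 0. Then the function u(t) = i ∫₀ᵗ exp(i λ ∫ₜ^s c(r) dr) f(s) ds is 2π-periodic and satisfies u′(t) + i λ c(t) u(t) = i f(t) for all t ∈ ℝ. -/

import Mathlib

open Real

theorem stmt4 (c f : ℝ → ℂ) (hc : Continuous c) (hf : Continuous f)
    (hcper : Function.Periodic c (2 * Real.pi)) (hfper : Function.Periodic f (2 * Real.pi))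
    (lam : ℝ)
    (hres : ∃ m : ℤ,
      (lam : ℂ) * (((2 * Real.pi : ℝ) : ℂ)⁻¹ * ∫ t in (0:ℝ)..(2 * Real.pi), c t) = (m : ℂ))
    (hcomp : (∫ t in (0:ℝ)..(2 * Real.pi),
        Complex.exp (Complex.I * (lam : ℂ) * ∫ s in (0:ℝ)..t, c s) * f t) = 0)
    (u : ℝ → ℂ)
    (hu : ∀ t : ℝ, u t = Complex.I *
        ∫ s in (0:ℝ)..t,
          Complex.exp (Complex.I * (lam : ℂ) * ∫ r in t..s, c r) * f s) :
    Function.Periodic u (2 * Real.pi) ∧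
      ∀ t : ℝ, HasDerivAt u (Complex.I * f t - Complex.I * (lam : ℂ) * c t * u t) t := by
  obtain ⟨m, hm⟩ := hres
  set C : ℝ → ℂ := fun t => ∫ s in (0:ℝ)..t, c s with hCdef
  set E : ℝ → ℂ := fun t => Complex.exp (Complex.I * (lam : ℂ) * C t) with hEdef
  set F : ℝ → ℂ := fun t => ∫ s in (0:ℝ)..t, E s * f s with hFdef
  have hCderiv : ∀ t, HasDerivAt C (c t) t := fun t =>
    intervalIntegral.integral_hasDerivAt_right (hc.intervalIntegrable _ _)
      hc.aestronglyMeasurable.stronglyMeasurableAtFilter hc.continuousAt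
  have hCcont : Continuous C := by
    exact continuous_iff_continuousAt.2 fun t => (hCderiv t).continuousAt
  have hEcont : Continuous E := by
    exact Complex.continuous_exp.comp ((continuous_const.mul hCcont))
  have hEf : Continuous (fun s => E s * f s) := hEcont.mul hf
  have hFderiv : ∀ t, HasDerivAt F (E t * f t) t := fun t =>
    intervalIntegral.integral_hasDerivAt_right (hEf.intervalIntegrable _ _)
      hEf.aestronglyMeasurable.stronglyMeasurableAtFilter hEf.continuousAt
  -- rewrite u
  have hu' : ∀ t, u t = Complex.I * Complex.exp (-(Complex.I * (lam : ℂ) * C t)) * F t := by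
    intro t
    rw [hu t]
    have h1 : ∀ s : ℝ, (∫ r in t..s, c r) = C s - C t := fun s => by
      rw [hCdef]
      rw [← intervalIntegral.integral_interval_sub_left (hc.intervalIntegrable _ _)
        (hc.intervalIntegrable _ _)]
    have h2 : ∀ s : ℝ, Complex.exp (Complex.I * (lam : ℂ) * ∫ r in t..s, c r) * f s
        = Complex.exp (-(Complex.I * (lam : ℂ) * C t)) * (E s * f s) := by
      intro s
      rw [h1 s, show Complex.I * (lam : ℂ) * (C s - C t)
          = -(Complex.I * (lam : ℂ) * C t) + Complex.I * (lam : ℂ) * C s from by ring,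
        Complex.exp_add, hEdef, mul_assoc]
    simp only [h2]
    rw [intervalIntegral.integral_const_mul, ← mul_assoc]
  -- arithmetic: lam * C(2π) = 2π m
  have hπ : ((2 * Real.pi : ℝ) : ℂ) ≠ 0 := by
    simpa using pi_ne_zero
  have hlC : (lam : ℂ) * C (2 * Real.pi) = ((2 * Real.pi : ℝ) : ℂ) * m := by
    have hπ' : (2 : ℂ) * (Real.pi : ℂ) ≠ 0 :=
      mul_ne_zero two_ne_zero (Complex.ofReal_ne_zero.2 Real.pi_ne_zero)
    have h := hm
    field_simp at h
    show (lam : ℂ) * (∫ t in (0:ℝ)..(2 * Real.pi), c t) = ((2 * Real.pi : ℝ) : ℂ) * m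
    push_cast at h ⊢
    linear_combination h
  have hexp2π : Complex.exp (Complex.I * (lam : ℂ) * C (2 * Real.pi)) = 1 := by
    have h : Complex.I * (lam : ℂ) * C (2 * Real.pi) = (m : ℂ) * (2 * (Real.pi : ℂ) * Complex.I) := by
      push_cast at hlC ⊢
      linear_combination Complex.I * hlC
    rw [h, Complex.exp_int_mul_two_pi_mul_I]
  have hCadd : ∀ t, C (t + 2 * Real.pi) = C t + C (2 * Real.pi) := by
    intro t
    have h1 : C t + (∫ s in t..(t + 2 * Real.pi), c s) = C (t + 2 * Real.pi) :=
      intervalIntegral.integral_add_adjacent_intervals (hc.intervalIntegrable _ _)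
        (hc.intervalIntegrable _ _)
    rw [← h1, hcper.intervalIntegral_add_eq t 0]
    simp [hCdef]
  have hEper : ∀ t, E (t + 2 * Real.pi) = E t := by
    intro t
    rw [hEdef]
    simp only [hCadd, mul_add, Complex.exp_add]
    rw [hexp2π, mul_one]
  have hFper : ∀ t, F (t + 2 * Real.pi) = F t := by
    intro t
    have h1 : F t + (∫ s in t..(t + 2 * Real.pi), E s * f s) = F (t + 2 * Real.pi) :=
      intervalIntegral.integral_add_adjacent_intervals (hEf.intervalIntegrable _ _)
        (hEf.intervalIntegrable _ _)
    have hperEf : Function.Periodic (fun s => E s * f s) (2 * Real.pi) := fun s => by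
      simp [hEper s, hfper s]
    rw [← h1, hperEf.intervalIntegral_add_eq t 0]
    have : (∫ s in (0:ℝ)..(0 + 2 * Real.pi), E s * f s) = 0 := by
      rw [zero_add]; exact hcomp
    rw [this, add_zero]
  constructor
  · intro t
    rw [hu' (t + 2 * Real.pi), hu' t, hCadd, hFper]
    simp only [mul_add, neg_add, Complex.exp_add]
    rw [show Complex.exp (-(Complex.I * (lam:ℂ) * C (2 * Real.pi))) = 1 by
      rw [Complex.exp_neg, hexp2π, inv_one]]
    ring
  · intro t
    have h1 : HasDerivAt (fun t => Complex.exp (-(Complex.I * (lam : ℂ) * C t)))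
        (-(Complex.I * (lam : ℂ) * c t) * Complex.exp (-(Complex.I * (lam : ℂ) * C t))) t := by
      have := (((hCderiv t).const_mul (Complex.I * (lam : ℂ))).neg).cexp
      simpa [mul_comm] using this
    have h2 : HasDerivAt (fun t => Complex.I * Complex.exp (-(Complex.I * (lam : ℂ) * C t)) * F t)
        ((Complex.I * (-(Complex.I * (lam : ℂ) * c t) *
            Complex.exp (-(Complex.I * (lam : ℂ) * C t)))) * F t
          + Complex.I * Complex.exp (-(Complex.I * (lam : ℂ) * C t)) * (E t * f t)) t :=
      (h1.const_mul Complex.I).mul (hFderiv t)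
    have hEq : (fun t => Complex.I * Complex.exp (-(Complex.I * (lam : ℂ) * C t)) * F t) = u := by
      funext s; rw [hu' s]
    rw [hEq] at h2
    convert h2 using 1
    rw [hu' t]
    have hinv : Complex.exp (-(Complex.I * (lam : ℂ) * C t)) * E t = 1 := by
      rw [hEdef, ← Complex.exp_add]
      simp
    linear_combination (-(Complex.I * f t)) * hinv
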